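/- Let r be a prime and let 𝓡 be the subring of ℤ[v^{±1}, z^{±1}] generated by v, v⁻¹, z and (v⁻¹ − v)z⁻¹. Suppose w ∈ 𝓡 is written as w = Σ_i u_i(v) z^i with u_i(v) ∈ ℤ[v^{±1}]. Then w lies in the ideal (r, z^r) of 𝓡 generated by r and z^r if and only if for every i ≤ r the coefficient u_i(v) lies in the ideal of ℤ[v^{±1}] generated by r and (v⁻¹ − v)^{r−i}. -/

import Mathlib

open LaurentPolynomial

/-- The Laurent polynomial ring `ℤ[v^{±1}, z^{±1}]`, with `z` the outer variable
and `v` the inner variable. -/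
abbrev LL : Type := LaurentPolynomial (LaurentPolynomial ℤ)

/-- The variable `v`. -/
noncomputable def vV : LL := C (T 1)

/-- The variable `v⁻¹`. -/
noncomputable def vVinv : LL := C (T (-1))

/-- The variable `z`. -/
noncomputable def zZ : LL := T 1

/-- The variable `z⁻¹`. -/
noncomputable def zZinv : LL := T (-1)

/-- The subring `𝓡` of `ℤ[v^{±1}, z^{±1}]` generated by `v`, `v⁻¹`, `z` and
`(v⁻¹ − v)z⁻¹`. -/
noncomputable def Rcal : Subring LL :=
  Subring.closure {vV, vVinv, zZ, (vVinv - vV) * zZinv}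

lemma zZ_pow_mem (r : ℕ) : zZ ^ r ∈ Rcal :=
  pow_mem (Subring.subset_closure (by simp)) r

/-! ### Auxiliary definitions and lemmas -/

/-- The element `v⁻¹ - v` of `ℤ[v^{±1}]`. -/
noncomputable def Av : LaurentPolynomial ℤ := T (-1) - T 1

lemma gen_eq : (vVinv - vV) * zZinv = (C Av * T (-1) : LL) := by
  simp [vVinv, vV, zZinv, Av, map_sub]

lemma Av_gen_mem : (C Av * T (-1) : LL) ∈ Rcal := by
  rw [← gen_eq]; exact Subring.subset_closure (by simp)

lemma mul_T_apply {R : Type*} [Ring R] (g : LaurentPolynomial R) (n i : ℤ) :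
    (g * (T n : LaurentPolynomial R)).coeff i = g.coeff (i - n) := by
  have hT : (T n : LaurentPolynomial R) = AddMonoidAlgebra.single n 1 := rfl
  rw [hT, AddMonoidAlgebra.coeff_mul_single_apply, mul_one, ← sub_eq_add_neg]

lemma mul_natCast_apply {R : Type*} [Ring R] (g : LaurentPolynomial R) (n : ℕ) (i : ℤ) :
    (g * (n : LaurentPolynomial R)).coeff i = g.coeff i * (n : R) := by
  have h : ((n : LaurentPolynomial R)) = AddMonoidAlgebra.single (0 : ℤ) ((n : R)) := by
    rw [single_eq_C, map_natCast]
  rw [h, AddMonoidAlgebra.coeff_mul_single_apply, neg_zero, add_zero]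

/-- Every element of `𝓡` has its `z^i`-coefficient divisible by `(v⁻¹-v)^{max(0,-i)}`. -/
lemma coeff_dvd {f : LL} (hf : f ∈ Rcal) : ∀ i : ℤ, Av ^ (-i).toNat ∣ f.coeff i := by
  induction hf using Subring.closure_induction with
  | mem x hx =>
    rcases hx with h | h | h | h
    · intro i
      by_cases hi : i = 0
      · subst hi; simp [h, vV]
      · simp [h, vV, hi]
    · intro i
      by_cases hi : i = 0
      · subst hi; simp [h, vVinv]
      · simp [h, vVinv, hi]
    · intro i
      by_cases hi : i = 1
      · subst hi; simp [h, zZ]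
      · simp [h, zZ, Ne.symm hi]
    · subst h
      rw [gen_eq]
      intro i
      rw [← single_eq_C_mul_T, AddMonoidAlgebra.coeff_single, Finsupp.single_apply]
      by_cases hi : (-1 : ℤ) = i
      · rw [if_pos hi, ← hi]
        simpa using dvd_refl Av
      · rw [if_neg hi]; exact dvd_zero _
  | zero => intro i; simp
  | one => intro i
           by_cases hi : i = 0
           · subst hi; simp [← T_zero]
           · rw [← T_zero, T_apply, if_neg (Ne.symm hi)]; exact dvd_zero _
  | add x y hx hy ihx ihy => intro i; rw [AddMonoidAlgebra.coeff_add, Finsupp.add_apply]; exact dvd_add (ihx i) (ihy i)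
  | neg x hx ihx => intro i; rw [AddMonoidAlgebra.coeff_neg, Finsupp.neg_apply]; exact dvd_neg.2 (ihx i)
  | mul x y hx hy ihx ihy =>
    intro i
    classical
    rw [AddMonoidAlgebra.coeff_mul]
    simp only [Finsupp.sum]
    refine Finset.dvd_sum fun a _ => Finset.dvd_sum fun b _ => ?_
    by_cases hab : a + b = i
    · rw [if_pos hab]
      refine dvd_trans (pow_dvd_pow Av (show (-i).toNat ≤ (-a).toNat + (-b).toNat by omega)) ?_
      rw [pow_add]
      exact mul_dvd_mul (ihx a) (ihy b)
    · rw [if_neg hab]; exact dvd_zero _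

lemma C_T_mem (n : ℤ) : (C (T n) : LL) ∈ Rcal := by
  rcases le_or_gt 0 n with h | h
  · have hT : (T n : LaurentPolynomial ℤ) = T 1 ^ n.toNat := by
      rw [T_pow, mul_one, Int.toNat_of_nonneg h]
    rw [hT, map_pow]
    exact pow_mem (Subring.subset_closure (by simp [vV])) _
  · have hT : (T n : LaurentPolynomial ℤ) = T (-1) ^ (-n).toNat := by
      rw [T_pow]
      congr 1
      omega
    rw [hT, map_pow]
    exact pow_mem (Subring.subset_closure (by simp [vVinv])) _

lemma C_mem (p : LaurentPolynomial ℤ) : (C p : LL) ∈ Rcal := by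
  induction p using LaurentPolynomial.induction_on' with
  | add p q hp hq => rw [map_add]; exact add_mem hp hq
  | C_mul_T n a =>
    rw [map_mul]
    refine mul_mem ?_ (C_T_mem n)
    have h1 : (C (C a) : LL) = ((a : ℤ) : LL) := by
      rw [← RingHom.comp_apply]; exact eq_intCast _ a
    rw [h1]
    exact intCast_mem Rcal a

lemma mem_builder {p : LaurentPolynomial ℤ} (i : ℤ) (h : Av ^ (-i).toNat ∣ p) :
    (C p * T i : LL) ∈ Rcal := by
  rcases le_or_gt 0 i with hi | hi
  · have hT : (T i : LL) = zZ ^ i.toNat := by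
      rw [zZ, T_pow, mul_one, Int.toNat_of_nonneg hi]
    rw [hT]
    exact mul_mem (C_mem p) (zZ_pow_mem _)
  · obtain ⟨q, rfl⟩ := h
    have h2 : (((-i).toNat : ℤ) * -1) = i := by omega
    have key : (C (Av ^ (-i).toNat * q) * T i : LL) = C q * (C Av * T (-1)) ^ (-i).toNat := by
      rw [mul_pow, ← map_pow, T_pow, h2, map_mul]
      ring
    rw [key]
    exact mul_mem (C_mem q) (pow_mem Av_gen_mem _)

lemma key_dvd (r : ℕ) (hr : r.Prime) (k : ℕ) {e a : LaurentPolynomial ℤ}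
    (h : Av ^ k * e = (r : LaurentPolynomial ℤ) * a) : (r : LaurentPolynomial ℤ) ∣ e := by
  haveI : Fact r.Prime := ⟨hr⟩
  obtain ⟨n, e', he⟩ := exists_T_pow e
  obtain ⟨m', a', ha⟩ := exists_T_pow a
  -- transfer the equation to `ℤ[X]`
  have hAvT : Av * T 1 = (1 : LaurentPolynomial ℤ) - T 2 := by
    rw [Av, sub_mul, ← T_add, ← T_add]
    norm_num
  have h1X : Polynomial.toLaurent ((1 - Polynomial.X ^ 2 : Polynomial ℤ)) =
      (1 : LaurentPolynomial ℤ) - T 2 := by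
    rw [map_sub, map_one, map_pow, Polynomial.toLaurent_X, T_pow, mul_one]
    norm_num
  have hpoly : ((1 - Polynomial.X ^ 2 : Polynomial ℤ)) ^ k * e' * Polynomial.X ^ m' =
      (r : Polynomial ℤ) * a' * Polynomial.X ^ (k + n) := by
    apply Polynomial.toLaurent_injective
    have lhs : Polynomial.toLaurent
        (((1 - Polynomial.X ^ 2 : Polynomial ℤ)) ^ k * e' * Polynomial.X ^ m') =
        (Av ^ k * e) * T (k + n + m') := by
      rw [map_mul, map_mul, map_pow, h1X, map_pow, Polynomial.toLaurent_X, T_pow, mul_one,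
        he, ← hAvT, mul_pow, T_pow, mul_one]
      rw [show Av ^ k * T ((k : ℕ) : ℤ) * (e * T ((n : ℕ) : ℤ)) * T ((m' : ℕ) : ℤ) =
        (Av ^ k * e) * (T ((k : ℕ) : ℤ) * T ((n : ℕ) : ℤ) * T ((m' : ℕ) : ℤ)) from by ring,
        ← T_add, ← T_add]
    have rhs : Polynomial.toLaurent
        ((r : Polynomial ℤ) * a' * Polynomial.X ^ (k + n)) =
        ((r : LaurentPolynomial ℤ) * a) * T (k + n + m') := by
      rw [map_mul, map_mul, map_natCast, map_pow, Polynomial.toLaurent_X, T_pow, mul_one, ha]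
      rw [show (((r : ℕ) : LaurentPolynomial ℤ) * (a * T ((m' : ℕ) : ℤ)) *
          T (((k + n : ℕ) : ℕ) : ℤ)) =
        (((r : ℕ) : LaurentPolynomial ℤ) * a) * (T (((k + n : ℕ) : ℕ) : ℤ) *
          T ((m' : ℕ) : ℤ)) from by ring, ← T_add]
      push_cast
      ring
    rw [lhs, rhs, h]
  -- reduce mod r
  have hmap : (Polynomial.map (Int.castRingHom (ZMod r)) e') = 0 := by
    have hcongr := congrArg (Polynomial.map (Int.castRingHom (ZMod r))) hpoly
    simp only [Polynomial.map_mul, Polynomial.map_pow, Polynomial.map_sub, Polynomial.map_one,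
      Polynomial.map_X, Polynomial.map_natCast] at hcongr
    rw [show ((r : ℕ) : Polynomial (ZMod r)) = 0 from by
      rw [← map_natCast (Polynomial.C : ZMod r →+* Polynomial (ZMod r)) r,
        ZMod.natCast_self, map_zero]] at hcongr
    simp only [zero_mul] at hcongr
    have hX : (Polynomial.X : Polynomial (ZMod r)) ^ m' ≠ 0 :=
      pow_ne_zero _ Polynomial.X_ne_zero
    have h1 : ((1 - Polynomial.X ^ 2 : Polynomial (ZMod r))) ^ k ≠ 0 := by
      apply pow_ne_zero
      intro h0
      have := congrArg (fun p => Polynomial.coeff p 0) h0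
      simp at this
    rcases mul_eq_zero.mp hcongr with h' | h'
    · rcases mul_eq_zero.mp h' with h'' | h''
      · exact absurd h'' h1
      · exact h''
    · exact absurd h' hX
  have hdvd : Polynomial.C ((r : ℤ)) ∣ e' := by
    rw [Polynomial.C_dvd_iff_dvd_coeff]
    intro j
    have := congrArg (fun p => Polynomial.coeff p j) hmap
    simp only [Polynomial.coeff_map, Polynomial.coeff_zero, Int.coe_castRingHom] at this
    exact_mod_cast (ZMod.intCast_zmod_eq_zero_iff_dvd _ r).mp this
  obtain ⟨b, hb⟩ := hdvd
  refine ⟨Polynomial.toLaurent b * T (-(n : ℤ)), ?_⟩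
  have he2 : e = Polynomial.toLaurent e' * T (-(n : ℤ)) := by
    rw [he, mul_assoc, ← T_add]
    simp
  rw [he2, hb, map_mul, Polynomial.toLaurent_C,
    map_natCast (LaurentPolynomial.C (R := ℤ)) r]
  ring

lemma natCast_ne_zero_L (r : ℕ) (hr : r ≠ 0) : ((r : ℕ) : LaurentPolynomial ℤ) ≠ 0 := by
  intro h
  have h2 : ((r : ℕ) : LaurentPolynomial ℤ).coeff 0 = (r : ℤ) := by
    rw [show ((r : ℕ) : LaurentPolynomial ℤ) = AddMonoidAlgebra.single (0 : ℤ) ((r : ℤ)) from by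
      rw [single_eq_C, map_natCast], AddMonoidAlgebra.coeff_single, Finsupp.single_apply]
    simp
  rw [h] at h2
  simp only [AddMonoidAlgebra.coeff_zero, Finsupp.coe_zero, Pi.zero_apply] at h2
  exact hr (by exact_mod_cast h2.symm)

theorem stmt_3 (r : ℕ) (hr : r.Prime) (w : Rcal)
    (u : ℤ → LaurentPolynomial ℤ) (s : Finset ℤ)
    (hw : (w : LL) = ∑ i ∈ s, C (u i) * T i)
    (hu : ∀ i ∉ s, u i = 0) :
    w ∈ Ideal.span ({(r : Rcal), ⟨zZ ^ r, zZ_pow_mem r⟩} : Set Rcal) ↔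
      ∀ i : ℤ, i ≤ (r : ℤ) →
        u i ∈ Ideal.span ({(r : LaurentPolynomial ℤ),
          (T (-1) - T 1) ^ ((r : ℤ) - i).toNat} : Set (LaurentPolynomial ℤ)) := by
  have hz : (zZ ^ r : LL) = T (r : ℤ) := by rw [zZ, T_pow, mul_one]
  have hAv : (T (-1) - T 1 : LaurentPolynomial ℤ) = Av := rfl
  have hcoeff : ∀ j : ℤ, (w : LL).coeff j = u j := by
    intro j
    rw [hw, AddMonoidAlgebra.coeff_sum, Finsupp.finset_sum_apply]
    simp_rw [← single_eq_C_mul_T, AddMonoidAlgebra.coeff_single, Finsupp.single_apply]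
    rw [Finset.sum_ite_eq' s j u]
    by_cases hj : j ∈ s
    · rw [if_pos hj]
    · rw [if_neg hj, hu j hj]
  constructor
  · -- forward direction
    intro h i hile
    obtain ⟨mm, nn, hmn⟩ := Ideal.mem_span_pair.mp h
    have hLL : (mm : LL) * (r : LL) + (nn : LL) * zZ ^ r = (w : LL) := by
      have := congrArg (fun x : Rcal => (x : LL)) hmn
      push_cast at this
      exact this
    have heq : (mm : LL).coeff i * ((r : ℕ) : LaurentPolynomial ℤ) + (nn : LL).coeff (i - (r : ℤ)) = u i := by
      rw [← hcoeff i, ← hLL, AddMonoidAlgebra.coeff_add, Finsupp.add_apply, mul_natCast_apply, hz, mul_T_apply]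
    obtain ⟨c, hc⟩ : Av ^ ((r : ℤ) - i).toNat ∣ (nn : LL).coeff (i - (r : ℤ)) := by
      have hd := coeff_dvd nn.2 (i - (r : ℤ))
      rwa [show (-(i - (r : ℤ))).toNat = ((r : ℤ) - i).toNat by omega] at hd
    rw [hAv, Ideal.mem_span_pair]
    exact ⟨(mm : LL).coeff i, c, by rw [← heq, hc]; ring⟩
  · -- backward direction
    intro h
    have hr0 : ((r : ℕ) : LaurentPolynomial ℤ) ≠ 0 := natCast_ne_zero_L r hr.ne_zero
    have hterm : ∀ i : ℤ, ∃ X Y : LL, X ∈ Rcal ∧ Y ∈ Rcal ∧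
        C (u i) * T i = X * ((r : ℕ) : LL) + Y * zZ ^ r := by
      intro i
      have hT : (T i : LL) = T (i - (r : ℤ)) * T (r : ℤ) := by
        rw [← T_add, sub_add_cancel]
      rcases le_or_gt i (r : ℤ) with hile | hgt
      · obtain ⟨a, b, hab⟩ := Ideal.mem_span_pair.mp (h i hile)
        rw [hAv] at hab
        have hk : Av ^ (-i).toNat ∣ u i := hcoeff i ▸ coeff_dvd w.2 i
        have h1 : Av ^ (-i).toNat ∣ a * ((r : ℕ) : LaurentPolynomial ℤ) := by
          have h2 : a * ((r : ℕ) : LaurentPolynomial ℤ) =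
              u i - b * Av ^ ((r : ℤ) - i).toNat := by rw [← hab]; ring
          rw [h2]
          exact dvd_sub hk (Dvd.dvd.mul_left (pow_dvd_pow Av (by omega)) b)
        obtain ⟨e, he⟩ := h1
        obtain ⟨e₂, he₂⟩ := key_dvd r hr (-i).toNat (show Av ^ (-i).toNat * e =
          ((r : ℕ) : LaurentPolynomial ℤ) * a by rw [← he]; ring)
        have ha2 : a = Av ^ (-i).toNat * e₂ := by
          apply mul_right_cancel₀ hr0
          rw [he, he₂]; ring
        refine ⟨C (Av ^ (-i).toNat * e₂) * T i,
          C (Av ^ ((r : ℤ) - i).toNat * b) * T (i - (r : ℤ)),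
          mem_builder i ⟨e₂, rfl⟩,
          mem_builder _ (Dvd.dvd.mul_right (pow_dvd_pow Av (by omega)) b), ?_⟩
        rw [hz, show ((r : ℕ) : LL) = C ((r : ℕ) : LaurentPolynomial ℤ) from
          (map_natCast C r).symm, ← hab, ha2, hT]
        simp only [map_add, map_mul, map_pow]
        ring
      · refine ⟨0, C (u i) * T (i - (r : ℤ)), zero_mem Rcal,
          mem_builder _ ?_, ?_⟩
        · rw [show (-(i - (r : ℤ))).toNat = 0 by omega, pow_zero]
          exact one_dvd _
        · rw [hz, hT, zero_mul, zero_add]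
          ring
    choose X Y hX hY heq using hterm
    rw [Ideal.mem_span_pair]
    refine ⟨⟨∑ i ∈ s, X i, sum_mem fun i _ => hX i⟩, ⟨∑ i ∈ s, Y i, sum_mem fun i _ => hY i⟩, ?_⟩
    apply Subtype.ext
    push_cast
    rw [hw]
    simp_rw [heq]
    rw [Finset.sum_add_distrib, ← Finset.sum_mul, ← Finset.sum_mul]
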